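/- Let n ≥ 2, 0 < α < 1, p = n/(n+α), and w ∈ A_1. Then there exists a constant C > 0 such that for every cube Q = Q(x₀, r), the function H(x) = r^{n+1}/(|x−x₀|^{n+1}·w(Q)^{1/p}) satisfies λ^p·w({x ∉ 2√n·Q : H(x) > λ}) ≤ C for all λ > 0. -/

import Mathlib

open MeasureTheory Metric Set ENNReal
open scoped Classical

noncomputable section

abbrev Rn (n : ℕ) : Type := EuclideanSpace ℝ (Fin n)

/-- Axis-parallel cube centered at `c` with side length `r`. -/
def cube {n : ℕ} (c : Rn n) (r : ℝ) : Set (Rn n) := {x | ∀ i, |x i - c i| ≤ r / 2}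

/-- The measure `w(E) = ∫_E w` with density `w` w.r.t. Lebesgue measure. -/
def wm {n : ℕ} (w : Rn n → ℝ) : Measure (Rn n) :=
  volume.withDensity (fun x => ENNReal.ofReal (w x))

/-- Muckenhoupt `A_q` condition for `q > 1`. -/
def IsAq {n : ℕ} (w : Rn n → ℝ) (q : ℝ) : Prop :=
  (∀ x, 0 ≤ w x) ∧ LocallyIntegrable w volume ∧
  ∃ C > 0, ∀ (c : Rn n) (r : ℝ), 0 < r →
    (((volume (cube c r)).toReal⁻¹ * ∫ x in cube c r, w x) *
      (((volume (cube c r)).toReal⁻¹ * ∫ x in cube c r, w x ^ (-1 / (q - 1))) ^ (q - 1))) ≤ C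

/-- Muckenhoupt `A_1` condition. -/
def IsA1 {n : ℕ} (w : Rn n → ℝ) : Prop :=
  (∀ x, 0 ≤ w x) ∧ LocallyIntegrable w volume ∧
  ∃ C > 0, ∀ (c : Rn n) (r : ℝ), 0 < r →
    ∀ᵐ y ∂(volume.restrict (cube c r)),
      (volume (cube c r)).toReal⁻¹ * ∫ x in cube c r, w x ≤ C * w y

/-- Muckenhoupt `A_q` condition for `q ≥ 1`. -/
def IsMuckenhoupt {n : ℕ} (w : Rn n → ℝ) (q : ℝ) : Prop :=
  if q = 1 then IsA1 w else IsAq w q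

/-- The parametric Marcinkiewicz integral `μ^ρ_Ω`. -/
def marc {n : ℕ} (ρ : ℝ) (Ω f : Rn n → ℝ) (x : Rn n) : ℝ :=
  (∫ t in Ioi (0:ℝ),
      (∫ y in {y : Rn n | dist x y ≤ t}, Ω (x - y) * ‖x - y‖ ^ (ρ - (n:ℝ)) * f y) ^ 2 *
        t ^ (-(2 * ρ + 1))) ^ ((1:ℝ)/2)

/-- `Ω` is homogeneous of degree zero. -/
def HomZero {n : ℕ} (Ω : Rn n → ℝ) : Prop :=
  ∀ t : ℝ, 0 < t → ∀ x : Rn n, x ≠ 0 → Ω (t • x) = Ω x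

/-- `Ω` has mean value zero on the unit sphere `S^{n-1}`. -/
def MeanZero {n : ℕ} (Ω : Rn n → ℝ) : Prop :=
  ∫ x : Metric.sphere (0 : Rn n) 1, Ω (x : Rn n) ∂((volume : Measure (Rn n)).toSphere) = 0

/-- `Ω ∈ Lip_α(S^{n-1})` with Lipschitz constant `L`. -/
def LipSphere {n : ℕ} (Ω : Rn n → ℝ) (α L : ℝ) : Prop :=
  ∀ x y : Rn n, ‖x‖ = 1 → ‖y‖ = 1 → |Ω x - Ω y| ≤ L * ‖x - y‖ ^ α

/-- `a` is a `w`-`(p,q,0)`-atom supported in the cube `Q(x₀, r)`. -/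
def IsAtomOn {n : ℕ} (w : Rn n → ℝ) (p q : ℝ) (a : Rn n → ℝ) (x₀ : Rn n) (r : ℝ) : Prop :=
  Measurable a ∧ Integrable a volume ∧
  (∀ x, x ∉ cube x₀ r → a x = 0) ∧
  (∫ x in cube x₀ r, |a x| ^ q * w x) ^ (1/q) ≤ (∫ x in cube x₀ r, w x) ^ (1/q - 1/p) ∧
  (∫ x, a x) = 0

/-- `a` is a `w`-`(p,q,0)`-atom. -/
def IsWAtom {n : ℕ} (w : Rn n → ℝ) (p q : ℝ) (a : Rn n → ℝ) : Prop :=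
  ∃ (x₀ : Rn n) (r : ℝ), 0 < r ∧ IsAtomOn w p q a x₀ r

/-- The weighted `L^p` (quasi-)norm `‖f‖_{L^p_w} = (∫ |f|^p w)^{1/p}`. -/
def wLp {n : ℕ} (w : Rn n → ℝ) (p : ℝ) (f : Rn n → ℝ) : ℝ≥0∞ :=
  (∫⁻ x, ENNReal.ofReal (|f x| ^ p * w x)) ^ (1/p)


lemma cube_eq {n : ℕ} (c : Rn n) (r : ℝ) :
    cube c r = (MeasurableEquiv.toLp 2 (Fin n → ℝ)).symm ⁻¹'
      (Set.univ.pi fun i => Icc (c i - r/2) (c i + r/2)) := by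
  ext x
  simp only [cube, mem_setOf_eq, mem_preimage, mem_pi, mem_univ, forall_true_left, mem_Icc,
    MeasurableEquiv.toLp_symm_apply]
  refine forall_congr' fun i => ?_
  rw [abs_sub_le_iff]
  constructor
  · rintro ⟨h1, h2⟩; constructor <;> [skip; skip] <;> (try simp [EuclideanSpace.equiv]) <;> linarith
  · intro h; constructor <;> [skip;skip] <;> (try simp [EuclideanSpace.equiv] at h ⊢) <;> linarith [h.1, h.2]

lemma measurableSet_cube {n : ℕ} (c : Rn n) (r : ℝ) : MeasurableSet (cube c r) := by
  rw [cube_eq]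
  exact (MeasurableEquiv.toLp 2 (Fin n → ℝ)).symm.measurable
    (MeasurableSet.univ_pi fun i => measurableSet_Icc)

lemma volume_cube {n : ℕ} (c : Rn n) (r : ℝ) (hr : 0 ≤ r) :
    volume (cube c r) = ENNReal.ofReal (r ^ n) := by
  rw [cube_eq, (EuclideanSpace.volume_preserving_symm_measurableEquiv_toLp (Fin n)).measure_preimage
    (MeasurableSet.univ_pi fun i => measurableSet_Icc).nullMeasurableSet]
  rw [volume_pi_pi]
  simp only [Real.volume_Icc]
  have : ∀ x : Fin n, c x + r / 2 - (c x - r / 2) = r := fun x => by ring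
  simp_rw [this]
  rw [Finset.prod_const, ← ENNReal.ofReal_pow hr]
  simp

lemma abs_apply_le_norm {n : ℕ} (x : Rn n) (i : Fin n) : |x i| ≤ ‖x‖ := by
  rw [EuclideanSpace.norm_eq]
  have h1 : |x i| = Real.sqrt (|x i|^2) := by rw [Real.sqrt_sq (abs_nonneg _)]
  rw [h1]
  apply Real.sqrt_le_sqrt
  exact Finset.single_le_sum (f := fun j => |x j|^2) (fun j _ => sq_nonneg _) (Finset.mem_univ i)

lemma isClosed_cube {n : ℕ} (c : Rn n) (r : ℝ) : IsClosed (cube c r) := by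
  have : cube c r = ⋂ i, {x : Rn n | |x i - c i| ≤ r / 2} := by ext x; simp [cube]
  rw [this]
  refine isClosed_iInter fun i => ?_
  have hc : Continuous fun x : Rn n => |x i - c i| :=
    (((continuous_apply i).comp (EuclideanSpace.equiv (Fin n) ℝ).continuous).sub
      continuous_const).abs
  exact isClosed_le hc continuous_const

lemma isCompact_cube {n : ℕ} (c : Rn n) (r : ℝ) : IsCompact (cube c r) := by
  refine Metric.isCompact_of_isClosed_isBounded (isClosed_cube c r) ?_
  refine (Metric.isBounded_iff_subset_closedBall c).mpr ⟨Real.sqrt n * (|r|/2), fun x hx => ?_⟩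
  simp only [Metric.mem_closedBall, dist_eq_norm]
  rw [EuclideanSpace.norm_eq]
  have hb : ∑ i, ‖(x - c : Rn n) i‖^2 ≤ (n : ℝ) * (|r|/2)^2 := by
    have h : ∀ i ∈ Finset.univ, ‖(x - c : Rn n) i‖^2 ≤ (|r|/2)^2 := by
      intro i _
      have hxi := hx i
      have h2 : |x i - c i| ≤ |r| / 2 := le_trans hxi (by linarith [le_abs_self r])
      simp only [Real.norm_eq_abs]
      have heq : |(x - c : Rn n) i| = |x i - c i| := rfl
      rw [heq]
      exact pow_le_pow_left₀ (abs_nonneg _) h2 2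
    calc ∑ i, ‖(x - c : Rn n) i‖^2 ≤ ∑ _i : Fin n, (|r|/2)^2 := Finset.sum_le_sum h
    _ = (n : ℝ) * (|r|/2)^2 := by simp [mul_comm]
  calc Real.sqrt (∑ i, ‖(x - c : Rn n) i‖^2) ≤ Real.sqrt ((n:ℝ) * (|r|/2)^2) :=
        Real.sqrt_le_sqrt hb
  _ = Real.sqrt n * (|r|/2) := by
      rw [Real.sqrt_mul (Nat.cast_nonneg n), Real.sqrt_sq (by positivity)]

lemma cube_subset {n : ℕ} (c : Rn n) {r s : ℝ} (h : r ≤ s) : cube c r ⊆ cube c s :=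
  fun x hx i => (hx i).trans (by linarith)

lemma doubling {n : ℕ} {w : Rn n → ℝ} (hloc : LocallyIntegrable w volume)
    {C₀ : ℝ} (hA : ∀ (c : Rn n) (r : ℝ), 0 < r →
      ∀ᵐ y ∂(volume.restrict (cube c r)),
        (volume (cube c r)).toReal⁻¹ * ∫ x in cube c r, w x ≤ C₀ * w y)
    (c : Rn n) {r t : ℝ} (hr : 0 < r) (ht : 1 ≤ t) :
    ∫ x in cube c (t*r), w x ≤ C₀ * t^n * ∫ x in cube c r, w x := by
  have ht0 : 0 < t := lt_of_lt_of_le one_pos ht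
  have htr : 0 < t * r := mul_pos ht0 hr
  set I := ∫ x in cube c (t*r), w x with hI
  set J := ∫ x in cube c r, w x with hJ
  set A := (volume (cube c (t*r))).toReal⁻¹ * I with hA'
  have hsub : cube c r ⊆ cube c (t*r) := cube_subset c (le_mul_of_one_le_left hr.le ht)
  have hae : ∀ᵐ y ∂(volume.restrict (cube c r)), A ≤ C₀ * w y :=
    ae_restrict_of_ae_restrict_of_subset hsub (hA c (t*r) htr)
  haveI : IsFiniteMeasure (volume.restrict (cube c r)) := by
    constructor
    rw [Measure.restrict_apply_univ, volume_cube _ _ hr.le]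
    exact ofReal_lt_top
  have hintw : IntegrableOn w (cube c r) volume :=
    hloc.integrableOn_isCompact (isCompact_cube c r)
  have hint1 : Integrable (fun _ : Rn n => A) (volume.restrict (cube c r)) := integrable_const A
  have hint2 : Integrable (fun y => C₀ * w y) (volume.restrict (cube c r)) :=
    hintw.const_mul C₀
  have hmono := integral_mono_ae hint1 hint2 hae
  rw [integral_const, MeasureTheory.integral_const_mul] at hmono
  have hv1 : (volume.restrict (cube c r)) univ = ENNReal.ofReal (r^n) := by
    rw [Measure.restrict_apply_univ, volume_cube _ _ hr.le]
  rw [Measure.real, hv1] at hmono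
  have hv2 : (volume (cube c (t*r))).toReal = (t*r)^n := by
    rw [volume_cube _ _ htr.le, ENNReal.toReal_ofReal (pow_nonneg htr.le n)]
  have htoR : (ENNReal.ofReal (r^n)).toReal = r^n :=
    ENNReal.toReal_ofReal (pow_nonneg hr.le n)
  rw [htoR] at hmono
  have hsmul : (r^n : ℝ) • A = r^n * A := rfl
  rw [hsmul, hA', hv2] at hmono
  have hrn : (0:ℝ) < r^n := pow_pos hr n
  have htn : (0:ℝ) < t^n := pow_pos ht0 n
  have h3 : (r^n) * (((t*r)^n)⁻¹ * I) = I / t^n := by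
    rw [mul_pow]; field_simp
  rw [h3] at hmono
  have := (div_le_iff₀ htn).mp hmono
  calc I ≤ (C₀ * J) * t^n := this
  _ = C₀ * t^n * J := by ring

/-- weak type estimate for `H(x) = r^{n+1}/(|x−x₀|^{n+1} w(Q)^{1/p})`
outside `2√n Q`, with `p = n/(n+α)` and `w ∈ A_1`. -/
theorem statement13 (n : ℕ) (hn : 2 ≤ n) (α : ℝ) (hα0 : 0 < α) (hα1 : α < 1)
    (w : Rn n → ℝ) (hw : IsA1 w) :
    ∃ C > 0, ∀ (x₀ : Rn n) (r : ℝ), 0 < r → ∀ lam : ℝ, 0 < lam →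
      ENNReal.ofReal (lam ^ ((n : ℝ) / (n + α))) *
        wm w {x | x ∉ cube x₀ (2 * Real.sqrt n * r) ∧
          lam < r ^ ((n : ℝ) + 1) /
            (‖x - x₀‖ ^ ((n : ℝ) + 1) * (∫ y in cube x₀ r, w y) ^ (((n : ℝ) + α) / n))} ≤
        ENNReal.ofReal C := by
  obtain ⟨h0, hloc, C₀, hC₀, hA⟩ := hw
  have hn1 : (1:ℝ) ≤ (n:ℝ) := by exact_mod_cast Nat.one_le_of_lt hn
  have hnpos : (0:ℝ) < (n:ℝ) := lt_of_lt_of_le one_pos hn1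
  have hna : (0:ℝ) < (n:ℝ) + α := by linarith
  have hn1' : (0:ℝ) < (n:ℝ) + 1 := by linarith
  refine ⟨C₀ * 2^n, by positivity, ?_⟩
  intro x₀ r hr lam hlam
  set q : ℝ := ((n:ℝ) + α) / (n:ℝ) with hq
  set p : ℝ := (n:ℝ) / ((n:ℝ) + α) with hp
  set W : ℝ := ∫ y in cube x₀ r, w y with hWdef
  set s : ℝ := W ^ q with hsdef
  set E : Set (Rn n) := {x | x ∉ cube x₀ (2 * Real.sqrt n * r) ∧
      lam < r ^ ((n:ℝ) + 1) / (‖x - x₀‖ ^ ((n:ℝ) + 1) * s)} with hEdef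
  have hqpos : 0 < q := div_pos hna hnpos
  have hppos : 0 < p := div_pos hnpos hna
  have hW0 : 0 ≤ W := setIntegral_nonneg (measurableSet_cube _ _) (fun x _ => h0 x)
  by_cases hne : E.Nonempty
  swap
  · rw [not_nonempty_iff_eq_empty] at hne
    rw [hne, measure_empty, mul_zero]
    exact zero_le
  obtain ⟨x, hx1, hx2⟩ := hne
  -- W > 0
  have hWpos : 0 < W := by
    rcases hW0.lt_or_eq with h | h
    · exact h
    · exfalso
      have hs0 : s = 0 := by rw [hsdef, ← h, Real.zero_rpow hqpos.ne']
      rw [hs0] at hx2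
      simp only [mul_zero, _root_.div_zero] at hx2
      exact absurd hx2 (not_lt.mpr hlam.le)
  have hspos : 0 < s := Real.rpow_pos_of_pos hWpos q
  -- geometry from witness
  have hsqrt1 : (1:ℝ) ≤ Real.sqrt n := by
    have := Real.sqrt_le_sqrt hn1
    simpa using this
  have hN0 : Real.sqrt n * r < ‖x - x₀‖ := by
    simp only [cube, mem_setOf_eq, not_forall, not_le] at hx1
    obtain ⟨i, hi⟩ := hx1
    have h1 : |(x - x₀ : Rn n) i| ≤ ‖x - x₀‖ := abs_apply_le_norm _ i
    have h2 : |(x - x₀ : Rn n) i| = |x i - x₀ i| := rfl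
    have h3 : 2 * Real.sqrt n * r / 2 = Real.sqrt n * r := by ring
    rw [h3] at hi
    rw [h2] at h1
    linarith
  have hrN : r < ‖x - x₀‖ := lt_of_le_of_lt (le_mul_of_one_le_left hr.le hsqrt1) hN0
  have hN0pos : (0:ℝ) < ‖x - x₀‖ := hr.trans hrN
  -- u < 1
  have hNe : (0:ℝ) < ‖x - x₀‖ ^ ((n:ℝ)+1) := Real.rpow_pos_of_pos hN0pos _
  have hD : (0:ℝ) < ‖x - x₀‖ ^ ((n:ℝ)+1) * s := mul_pos hNe hspos
  have hlt : lam * (‖x - x₀‖ ^ ((n:ℝ)+1) * s) < r ^ ((n:ℝ)+1) := (lt_div_iff₀ hD).mp hx2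
  have hre : r ^ ((n:ℝ)+1) < ‖x - x₀‖ ^ ((n:ℝ)+1) := Real.rpow_lt_rpow hr.le hrN (by linarith)
  set u : ℝ := lam * s with hudef
  have hu0 : 0 < u := mul_pos hlam hspos
  have hu1 : u < 1 := by
    have h5 : u * ‖x - x₀‖ ^ ((n:ℝ)+1) < 1 * ‖x - x₀‖ ^ ((n:ℝ)+1) := by
      rw [one_mul]
      calc u * ‖x - x₀‖ ^ ((n:ℝ)+1) = lam * (‖x - x₀‖ ^ ((n:ℝ)+1) * s) := by
            rw [hudef]; ring
      _ < r ^ ((n:ℝ)+1) := hlt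
      _ < ‖x - x₀‖ ^ ((n:ℝ)+1) := hre
    exact lt_of_mul_lt_mul_right h5 hNe.le
  set a : ℝ := -(1:ℝ)/((n:ℝ)+1) with hadef
  have ha0 : a ≤ 0 := by
    rw [hadef]
    apply div_nonpos_of_nonpos_of_nonneg <;> [norm_num; linarith]
  have hua1 : 1 ≤ u ^ a := Real.one_le_rpow_of_pos_of_le_one_of_nonpos hu0 hu1.le ha0
  have huapos : 0 < u ^ a := Real.rpow_pos_of_pos hu0 a
  set t : ℝ := 2 * u ^ a with htdef
  have ht1 : 1 ≤ t := by rw [htdef]; linarith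
  have ht0 : 0 < t := lt_of_lt_of_le one_pos ht1
  have hta : (u ^ a) ^ ((n:ℝ)+1) = u⁻¹ := by
    rw [← Real.rpow_mul hu0.le]
    have : a * ((n:ℝ)+1) = -1 := by rw [hadef]; field_simp
    rw [this, Real.rpow_neg_one]
  -- inclusion
  have hsub : E ⊆ cube x₀ (t*r) := by
    rintro x' ⟨_, hx'2⟩ i
    have hR : t * r / 2 = r * u ^ a := by rw [htdef]; ring
    have habs : |x' i - x₀ i| ≤ ‖x' - x₀‖ := abs_apply_le_norm (x' - x₀) i
    have hNR : ‖x' - x₀‖ < r * u ^ a := by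
      rcases eq_or_lt_of_le (norm_nonneg (x' - x₀)) with h | hNpos
      · rw [← h]; positivity
      · have hD' : (0:ℝ) < ‖x' - x₀‖ ^ ((n:ℝ)+1) * s :=
          mul_pos (Real.rpow_pos_of_pos hNpos _) hspos
        have hlt' : lam * (‖x' - x₀‖ ^ ((n:ℝ)+1) * s) < r ^ ((n:ℝ)+1) :=
          (lt_div_iff₀ hD').mp hx'2
        have hRe : (r * u ^ a) ^ ((n:ℝ)+1) = r ^ ((n:ℝ)+1) * u⁻¹ := by
          rw [Real.mul_rpow hr.le huapos.le, hta]
        have hNe_lt : ‖x' - x₀‖ ^ ((n:ℝ)+1) < (r * u ^ a) ^ ((n:ℝ)+1) := by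
          rw [hRe]
          have h6 : ‖x' - x₀‖ ^ ((n:ℝ)+1) * u < r ^ ((n:ℝ)+1) := by
            calc ‖x' - x₀‖ ^ ((n:ℝ)+1) * u = lam * (‖x' - x₀‖ ^ ((n:ℝ)+1) * s) := by
                  rw [hudef]; ring
            _ < r ^ ((n:ℝ)+1) := hlt'
          calc ‖x' - x₀‖ ^ ((n:ℝ)+1) = (‖x' - x₀‖ ^ ((n:ℝ)+1) * u) * u⁻¹ := by
                field_simp
          _ < r ^ ((n:ℝ)+1) * u⁻¹ := mul_lt_mul_of_pos_right h6 (inv_pos.mpr hu0)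
        by_contra hcon
        push_neg at hcon
        exact absurd (Real.rpow_le_rpow (by positivity) hcon (by linarith))
          (not_le.mpr hNe_lt)
    rw [hR]
    exact habs.trans (le_of_lt (lt_of_le_of_lt (le_refl _) hNR))
  -- measure estimates
  have hmeas : wm w E ≤ wm w (cube x₀ (t*r)) := measure_mono hsub
  have hwmc : wm w (cube x₀ (t*r)) = ENNReal.ofReal (∫ y in cube x₀ (t*r), w y) := by
    rw [wm, withDensity_apply _ (measurableSet_cube _ _)]
    exact (ofReal_integral_eq_lintegral_ofReal
      (hloc.integrableOn_isCompact (isCompact_cube _ _))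
      (Filter.Eventually.of_forall fun y => h0 y)).symm
  have hdoub : ∫ y in cube x₀ (t*r), w y ≤ C₀ * t^n * W := doubling hloc hA x₀ hr ht1
  -- key real inequality
  have hkey : lam ^ p * (C₀ * t^n * W) ≤ C₀ * 2^n := by
    have htn : t^n = 2^n * u ^ (a * n) := by
      rw [htdef, mul_pow, ← Real.rpow_natCast (u ^ a) n, ← Real.rpow_mul hu0.le]
    have hlamp : lam ^ p = u ^ p / W := by
      have hlam_eq : lam = u / s := by rw [hudef]; field_simp
      rw [hlam_eq, Real.div_rpow hu0.le hspos.le]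
      congr 1
      rw [hsdef, ← Real.rpow_mul hW0]
      rw [show q * p = 1 by rw [hq, hp]; field_simp]
      exact Real.rpow_one W
    rw [hlamp, htn]
    have heq : u ^ p / W * (C₀ * (2^n * u ^ (a * n)) * W) =
        C₀ * 2^n * u ^ (p + a * n) := by
      rw [Real.rpow_add hu0]
      field_simp
    rw [heq]
    have h1 : (n:ℝ)/((n:ℝ)+1) ≤ (n:ℝ)/((n:ℝ)+α) := by
      apply div_le_div_of_nonneg_left hnpos.le hna
      linarith
    have han : a * n = -((n:ℝ)/((n:ℝ)+1)) := by rw [hadef]; ring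
    have hexp : 0 ≤ p + a * n := by rw [hp, han]; linarith
    have hle1 : u ^ (p + a * n) ≤ 1 := Real.rpow_le_one hu0.le hu1.le hexp
    have hCpos : (0:ℝ) ≤ C₀ * 2^n := by positivity
    calc C₀ * 2^n * u ^ (p + a*n) ≤ C₀ * 2^n * 1 :=
          mul_le_mul_of_nonneg_left hle1 hCpos
    _ = C₀ * 2^n := mul_one _
  -- assembly
  calc ENNReal.ofReal (lam ^ p) * wm w E
      ≤ ENNReal.ofReal (lam ^ p) * ENNReal.ofReal (∫ y in cube x₀ (t*r), w y) := by
        rw [← hwmc]; gcongr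
  _ = ENNReal.ofReal (lam ^ p * ∫ y in cube x₀ (t*r), w y) :=
        (ENNReal.ofReal_mul (Real.rpow_nonneg hlam.le p)).symm
  _ ≤ ENNReal.ofReal (C₀ * 2^n) := by
        apply ENNReal.ofReal_le_ofReal
        exact le_trans (mul_le_mul_of_nonneg_left hdoub (Real.rpow_nonneg hlam.le p)) hkey

end
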